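/- In the balls-and-bins model with n ≥ 1 balls, k ≥ 1 bins and parameter z ∈ [0,1], for every integer x with 0 ≤ x ≤ n, the probability that the number of singleton bins equals x is P_n(x) = Σ_{r=x}^{n} (−1)^{r−x} · C(r,x) · C(k,r) · C(n,r) · r! · (z/k)^r · (1 − r·z/k)^{n−r}. -/

import Mathlib

/-- Probability weight of one ball's landing spot: `some j` (bin `j`) has
probability `z/k`, `none` (not thrown) has probability `1 - z`. -/
noncomputable def ballWeight (k : ℕ) (z : ℝ) : Option (Fin k) → ℝ
  | none => 1 - z
  | some _ => z / k

/-- Probability of an outcome `ω` of throwing the `n` balls independently. -/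
noncomputable def outcomeProb (n k : ℕ) (z : ℝ) (ω : Fin n → Option (Fin k)) : ℝ :=
  ∏ i : Fin n, ballWeight k z (ω i)

/-- The set of singleton bins of an outcome: bins containing exactly one ball. -/
def singletonBins {n k : ℕ} (ω : Fin n → Option (Fin k)) : Finset (Fin k) :=
  Finset.univ.filter fun j => (Finset.univ.filter fun i => ω i = some j).card = 1

open Finset

lemma bb_altSum (q m : ℕ) (h : q ≤ m) :
    ∑ t ∈ Finset.range (m + 1), (-1 : ℝ) ^ t * (q.choose t : ℝ)
      = if q = 0 then 1 else 0 := by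
  have hsub : Finset.range (q + 1) ⊆ Finset.range (m + 1) := by
    apply Finset.range_subset_range.mpr; omega
  rw [← Finset.sum_subset hsub (by
    intro t _ ht
    simp only [Finset.mem_range, Nat.lt_succ_iff, not_le] at ht
    simp [Nat.choose_eq_zero_of_lt ht])]
  have h2 := Int.alternating_sum_range_choose (n := q)
  have h3 : ((∑ i ∈ Finset.range (q + 1), (-1 : ℤ) ^ i * q.choose i : ℤ) : ℝ)
      = ((if q = 0 then 1 else 0 : ℤ) : ℝ) := by rw [h2]
  push_cast at h3
  exact h3

lemma bb_key (x n s : ℕ) (hx : x ≤ n) (hs : s ≤ n) :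
    ∑ r ∈ Finset.Icc x n, (-1 : ℝ) ^ (r - x) * (r.choose x : ℝ) * (s.choose r : ℝ)
      = if s = x then 1 else 0 := by
  by_cases hsx : s < x
  · rw [if_neg (by omega)]
    apply Finset.sum_eq_zero
    intro r hr
    rw [Finset.mem_Icc] at hr
    rw [Nat.choose_eq_zero_of_lt (show s < r by omega)]
    simp
  · push_neg at hsx
    have hnat : ∀ r, x ≤ r → (s.choose r : ℝ) * (r.choose x : ℝ)
        = (s.choose x : ℝ) * ((s - x).choose (r - x) : ℝ) := by
      intro r hr
      by_cases hrs : r ≤ s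
      · rw_mod_cast [Nat.choose_mul (n := s) hr]
      · push_neg at hrs
        rw [Nat.choose_eq_zero_of_lt hrs,
          Nat.choose_eq_zero_of_lt (show s - x < r - x by omega)]
        simp
    have hcongr : ∀ r ∈ Finset.Icc x n,
        (-1 : ℝ) ^ (r - x) * (r.choose x : ℝ) * (s.choose r : ℝ)
          = (s.choose x : ℝ) * ((-1 : ℝ) ^ (r - x) * ((s - x).choose (r - x) : ℝ)) := by
      intro r hr
      rw [Finset.mem_Icc] at hr
      linear_combination (-1 : ℝ) ^ (r - x) * hnat r hr.1
    rw [Finset.sum_congr rfl hcongr, ← Finset.mul_sum]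
    have hIccIco : Finset.Icc x n = Finset.Ico x (n + 1) := by
      rw [Finset.Ico_add_one_right_eq_Icc]
    rw [hIccIco, Finset.sum_Ico_eq_sum_range]
    have hrw : n + 1 - x = (n - x) + 1 := by omega
    rw [hrw]
    have hcongr2 : ∀ t ∈ Finset.range (n - x + 1),
        (-1 : ℝ) ^ (x + t - x) * ((s - x).choose (x + t - x) : ℝ)
          = (-1 : ℝ) ^ t * ((s - x).choose t : ℝ) := by
      intro t _
      have ht : x + t - x = t := by omega
      rw [ht]
    rw [Finset.sum_congr rfl hcongr2, bb_altSum (s - x) (n - x) (by omega)]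
    by_cases hsx' : s = x
    · subst hsx'; simp
    · rw [if_neg (by omega), if_neg hsx', mul_zero]

/-- Restriction of a bin value to the bins in `T`. -/
def bbBr {k : ℕ} (T : Finset (Fin k)) : Fin k → Option (Fin k) :=
  fun j => if j ∈ T then some j else none

lemma bb_bind_some_iff {k : ℕ} (T : Finset (Fin k)) (b : Option (Fin k)) (j : Fin k) :
    b.bind (bbBr T) = some j ↔ b = some j ∧ j ∈ T := by
  cases b with
  | none => simp
  | some j' =>
      by_cases hj' : j' ∈ T
      · simp only [Option.bind_some, bbBr, if_pos hj', Option.some_inj]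
        constructor
        · rintro rfl; exact ⟨rfl, hj'⟩
        · rintro ⟨h, _⟩; exact h
      · simp only [Option.bind_some, bbBr, if_neg hj']
        constructor
        · rintro ⟨⟩
        · rintro ⟨h, hj⟩
          rw [Option.some_inj] at h; subst h; exact absurd hj hj'

lemma bb_coordSum_some (k : ℕ) (z : ℝ) (T : Finset (Fin k)) (j : Fin k) :
    (∑ b : Option (Fin k), if b.bind (bbBr T) = some j then ballWeight k z b else 0)
      = if j ∈ T then z / k else 0 := by
  rw [Fintype.sum_option]
  have h0 : (if (none : Option (Fin k)).bind (bbBr T) = some j then ballWeight k z none else 0)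
      = 0 := by simp
  rw [h0, zero_add]
  have hcongr : ∀ j' : Fin k,
      (if (some j').bind (bbBr T) = some j then ballWeight k z (some j') else 0)
        = if j' = j ∧ j ∈ T then z / k else 0 := by
    intro j'
    simp only [bb_bind_some_iff, Option.some_inj, ballWeight]
  rw [Finset.sum_congr rfl (fun j' _ => hcongr j')]
  by_cases hj : j ∈ T <;> simp [hj]

lemma bb_sum_weights (k : ℕ) (hk : 1 ≤ k) (z : ℝ) :
    ∑ b : Option (Fin k), ballWeight k z b = 1 := by
  rw [Fintype.sum_option]
  simp only [ballWeight, Finset.sum_const, Finset.card_univ, Fintype.card_fin, nsmul_eq_mul]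
  have : (k : ℝ) ≠ 0 := Nat.cast_ne_zero.mpr (by omega)
  field_simp
  ring

lemma bb_coordSum_none (n k : ℕ) (hk : 1 ≤ k) (z : ℝ) (T : Finset (Fin k)) :
    (∑ b : Option (Fin k), if b.bind (bbBr T) = none then ballWeight k z b else 0)
      = 1 - T.card * z / k := by
  have hk0 : (k : ℝ) ≠ 0 := Nat.cast_ne_zero.mpr (by omega)
  have hsplit : ∀ b : Option (Fin k),
      (if b.bind (bbBr T) = none then ballWeight k z b else 0)
        = ballWeight k z b - (∑ j ∈ T, if b.bind (bbBr T) = some j then ballWeight k z b else 0) := by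
    intro b
    rcases hb : b.bind (bbBr T) with _ | j0
    · simp
    · have hj0 : b = some j0 ∧ j0 ∈ T := (bb_bind_some_iff T b j0).mp hb
      rw [if_neg (by simp)]
      have hsum : (∑ j ∈ T, if some j0 = some j then ballWeight k z b else 0)
          = ballWeight k z b := by
        rw [Finset.sum_eq_single j0]
        · simp
        · intro j _ hjne; simp [Ne.symm hjne]
        · intro h; exact absurd hj0.2 h
      rw [hsum]; ring
  rw [Finset.sum_congr rfl (fun b _ => hsplit b), Finset.sum_sub_distrib,
    bb_sum_weights k hk z, Finset.sum_comm]
  have : ∀ j ∈ T,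
      (∑ b : Option (Fin k), if b.bind (bbBr T) = some j then ballWeight k z b else 0)
        = z / k := by
    intro j hj
    rw [bb_coordSum_some k z T j, if_pos hj]
  rw [Finset.sum_congr rfl this, Finset.sum_const, nsmul_eq_mul]
  ring

lemma bb_fiber_sum (n k : ℕ) (z : ℝ) (T : Finset (Fin k)) (c : Fin n → Option (Fin k)) :
    (∑ ω ∈ Finset.univ.filter
        (fun ω : Fin n → Option (Fin k) => (fun i => (ω i).bind (bbBr T)) = c),
      outcomeProb n k z ω)
      = ∏ i : Fin n,
          (∑ b : Option (Fin k), if b.bind (bbBr T) = c i then ballWeight k z b else 0) := by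
  classical
  rw [Finset.prod_univ_sum (fun _ => (Finset.univ : Finset (Option (Fin k))))
    (fun i b => if b.bind (bbBr T) = c i then ballWeight k z b else 0)]
  rw [Fintype.piFinset_univ, Finset.sum_filter]
  apply Finset.sum_congr rfl
  intro ω _
  rw [Fintype.prod_ite_zero]
  by_cases h : (fun i => (ω i).bind (bbBr T)) = c
  · rw [if_pos h, if_pos (fun i => congrFun h i)]; rfl
  · rw [if_neg h, if_neg (fun hh => h (funext hh))]

/-- From an embedding of `T` into the balls, the associated outcome trace. -/
noncomputable def bbPhi {n k : ℕ} (T : Finset (Fin k)) (e : {j // j ∈ T} ↪ Fin n) :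
    Fin n → Option (Fin k) :=
  fun i => if h : ∃ jj : {j // j ∈ T}, e jj = i then some (h.choose : {j // j ∈ T}).1 else none

lemma bbPhi_eq_some_iff {n k : ℕ} (T : Finset (Fin k)) (e : {j // j ∈ T} ↪ Fin n)
    (i : Fin n) (j : Fin k) :
    bbPhi T e i = some j ↔ ∃ hj : j ∈ T, e ⟨j, hj⟩ = i := by
  unfold bbPhi
  split_ifs with h
  · simp only [Option.some_inj]
    constructor
    · rintro rfl
      exact ⟨(h.choose).2, h.choose_spec⟩
    · rintro ⟨hj, hei⟩
      have : h.choose = ⟨j, hj⟩ := e.injective (by rw [h.choose_spec, hei])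
      rw [this]
  · constructor
    · rintro ⟨⟩
    · rintro ⟨hj, hei⟩; exact absurd ⟨⟨j, hj⟩, hei⟩ h

lemma bbPhi_filter_eq {n k : ℕ} (T : Finset (Fin k)) (e : {j // j ∈ T} ↪ Fin n)
    (j : Fin k) (hj : j ∈ T) :
    (Finset.univ.filter fun i => bbPhi T e i = some j) = {e ⟨j, hj⟩} := by
  ext i
  simp only [Finset.mem_filter, Finset.mem_univ, true_and, Finset.mem_singleton,
    bbPhi_eq_some_iff]
  constructor
  · rintro ⟨hj', hei⟩; rw [← hei]
  · rintro rfl; exact ⟨hj, rfl⟩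

lemma bb_count (n k : ℕ) (T : Finset (Fin k)) :
    (Finset.univ.filter (fun c : Fin n → Option (Fin k) =>
        (∀ j ∈ T, (Finset.univ.filter fun i => c i = some j).card = 1) ∧
        (∀ i j, c i = some j → j ∈ T))).card
      = n.descFactorial T.card := by
  classical
  have hcard : n.descFactorial T.card = (Finset.univ : Finset ({j // j ∈ T} ↪ Fin n)).card := by
    rw [Finset.card_univ, Fintype.card_embedding_eq, Fintype.card_coe, Fintype.card_fin]
  rw [hcard]
  apply (Finset.card_bij (fun e _ => bbPhi T e) ?_ ?_ ?_).symm
  · -- maps to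
    intro e _
    rw [Finset.mem_filter]
    refine ⟨Finset.mem_univ _, ?_, ?_⟩
    · intro j hj
      rw [bbPhi_filter_eq T e j hj, Finset.card_singleton]
    · intro i j hij
      exact ((bbPhi_eq_some_iff T e i j).mp hij).choose
  · -- injective
    intro e _ e' _ hee
    ext jj
    have h1 : bbPhi T e (e jj) = some jj.1 :=
      (bbPhi_eq_some_iff T e (e jj) jj.1).mpr ⟨jj.2, by congr⟩
    rw [hee] at h1
    obtain ⟨hj, hei⟩ := (bbPhi_eq_some_iff T e' (e jj) jj.1).mp h1
    rw [← hei]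
  · -- surjective
    intro c hc
    rw [Finset.mem_filter] at hc
    obtain ⟨-, h1, h2⟩ := hc
    have hex : ∀ jj : {j // j ∈ T},
        ∃ a : Fin n, (Finset.univ.filter fun i => c i = some jj.1) = {a} :=
      fun jj => Finset.card_eq_one.mp (h1 jj.1 jj.2)
    choose f hf using hex
    have hcf : ∀ jj, c (f jj) = some jj.1 := by
      intro jj
      have : f jj ∈ (Finset.univ.filter fun i => c i = some jj.1) := by
        rw [hf jj]; exact Finset.mem_singleton_self _
      exact (Finset.mem_filter.mp this).2
    have hinj : Function.Injective f := by
      intro a b hab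
      have := hcf a
      rw [hab, hcf b, Option.some_inj] at this
      exact Subtype.ext this.symm
    refine ⟨⟨f, hinj⟩, Finset.mem_univ _, ?_⟩
    show bbPhi T ⟨f, hinj⟩ = c
    funext i
    rcases hci : c i with _ | j
    · rcases h : bbPhi T ⟨f, hinj⟩ i with _ | j'
      · rfl
      · obtain ⟨hj', hei⟩ := (bbPhi_eq_some_iff T ⟨f, hinj⟩ i j').mp h
        have : c i = some j' := by
          rw [show i = f ⟨j', hj'⟩ from hei.symm]
          exact hcf _
        rw [hci] at this; cases this
    · have hjT : j ∈ T := h2 i j hci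
      have hi : i ∈ (Finset.univ.filter fun ii => c ii = some j) := by
        rw [Finset.mem_filter]; exact ⟨Finset.mem_univ _, hci⟩
      rw [hf ⟨j, hjT⟩, Finset.mem_singleton] at hi
      rw [(bbPhi_eq_some_iff T ⟨f, hinj⟩ i j).mpr ⟨hjT, hi.symm⟩]

lemma bb_prod_coord (n k : ℕ) (hk : 1 ≤ k) (z : ℝ) (T : Finset (Fin k))
    (c : Fin n → Option (Fin k))
    (h1 : ∀ j ∈ T, (Finset.univ.filter fun i => c i = some j).card = 1)
    (h2 : ∀ i j, c i = some j → j ∈ T) :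
    (∏ i : Fin n,
        (∑ b : Option (Fin k), if b.bind (bbBr T) = c i then ballWeight k z b else 0))
      = (z / k) ^ T.card * (1 - T.card * z / k) ^ (n - T.card) := by
  classical
  rw [← Finset.prod_filter_mul_prod_filter_not Finset.univ (fun i => c i = none)]
  have hA : ∀ i ∈ Finset.univ.filter (fun i : Fin n => c i = none),
      (∑ b : Option (Fin k), if b.bind (bbBr T) = c i then ballWeight k z b else 0)
        = 1 - T.card * z / k := by
    intro i hi
    rw [(Finset.mem_filter.mp hi).2, bb_coordSum_none n k hk z T]
  have hB : ∀ i ∈ Finset.univ.filter (fun i : Fin n => ¬ c i = none),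
      (∑ b : Option (Fin k), if b.bind (bbBr T) = c i then ballWeight k z b else 0)
        = z / k := by
    intro i hi
    have hne := (Finset.mem_filter.mp hi).2
    rcases hci : c i with _ | j
    · exact absurd hci hne
    · rw [bb_coordSum_some k z T j, if_pos (h2 i j hci)]
  rw [Finset.prod_congr rfl hA, Finset.prod_congr rfl hB, Finset.prod_const, Finset.prod_const]
  have hcardB : (Finset.univ.filter (fun i : Fin n => ¬ c i = none)).card = T.card := by
    have hset : Finset.univ.filter (fun i : Fin n => ¬ c i = none)
        = T.biUnion (fun j => Finset.univ.filter fun i => c i = some j) := by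
      ext i
      simp only [Finset.mem_filter, Finset.mem_univ, true_and, Finset.mem_biUnion]
      constructor
      · intro hne
        rcases hci : c i with _ | j
        · exact absurd hci hne
        · exact ⟨j, h2 i j hci, by simp [hci]⟩
      · rintro ⟨j, _, hij⟩
        simp [hij]
    rw [hset, Finset.card_biUnion]
    · rw [Finset.sum_congr rfl h1, Finset.sum_const, smul_eq_mul, mul_one]
    · intro j _ j' _ hjj
      rw [Function.onFun, Finset.disjoint_left]
      intro i hi hi'
      rw [Finset.mem_filter] at hi hi'
      rw [hi.2] at hi'
      exact hjj (Option.some_inj.mp hi'.2)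
  have hcardA : (Finset.univ.filter (fun i : Fin n => c i = none)).card = n - T.card := by
    have := Finset.card_filter_add_card_filter_not
      (s := (Finset.univ : Finset (Fin n))) (p := fun i => c i = none)
    rw [Finset.card_univ, Fintype.card_fin] at this
    omega
  rw [hcardA, hcardB, mul_comm]

lemma bb_event_sum (n k : ℕ) (hk : 1 ≤ k) (z : ℝ) (T : Finset (Fin k)) :
    (∑ ω ∈ Finset.univ.filter
        (fun ω : Fin n → Option (Fin k) => T ⊆ singletonBins ω), outcomeProb n k z ω)
      = (n.descFactorial T.card : ℝ)
          * ((z / k) ^ T.card * (1 - T.card * z / k) ^ (n - T.card)) := by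
  classical
  -- event depends only on the trace
  have hevent : ∀ ω : Fin n → Option (Fin k),
      (T ⊆ singletonBins ω) ↔
        (∀ j ∈ T, (Finset.univ.filter fun i => (ω i).bind (bbBr T) = some j).card = 1) := by
    intro ω
    constructor
    · intro hsub j hj
      have hmem := hsub hj
      rw [singletonBins, Finset.mem_filter] at hmem
      rw [← hmem.2]
      congr 1
      ext i
      simp only [Finset.mem_filter, Finset.mem_univ, true_and, bb_bind_some_iff]
      exact ⟨fun h => h.1, fun h => ⟨h, hj⟩⟩
    · intro h j hj
      rw [singletonBins, Finset.mem_filter]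
      refine ⟨Finset.mem_univ _, ?_⟩
      rw [← h j hj]
      congr 1
      ext i
      simp only [Finset.mem_filter, Finset.mem_univ, true_and, bb_bind_some_iff]
      exact ⟨fun h' => ⟨h', hj⟩, fun h' => h'.1⟩
  set Match : (Fin n → Option (Fin k)) → Prop :=
    fun c => ∀ j ∈ T, (Finset.univ.filter fun i => c i = some j).card = 1 with hMatch
  set Good : (Fin n → Option (Fin k)) → Prop :=
    fun c => ∀ i j, c i = some j → j ∈ T with hGood
  have step1 : (∑ ω ∈ Finset.univ.filter
        (fun ω : Fin n → Option (Fin k) => T ⊆ singletonBins ω), outcomeProb n k z ω)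
      = ∑ ω : Fin n → Option (Fin k),
          if Match (fun i => (ω i).bind (bbBr T)) then outcomeProb n k z ω else 0 := by
    rw [Finset.sum_filter]
    apply Finset.sum_congr rfl
    intro ω _
    by_cases h : T ⊆ singletonBins ω
    · rw [if_pos h, if_pos ((hevent ω).mp h)]
    · rw [if_neg h, if_neg (fun hh => h ((hevent ω).mpr hh))]
  rw [step1]
  have step2 : (∑ ω : Fin n → Option (Fin k),
        if Match (fun i => (ω i).bind (bbBr T)) then outcomeProb n k z ω else 0)
      = ∑ c : Fin n → Option (Fin k),
          if Match c then
            (∑ ω ∈ Finset.univ.filter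
              (fun ω : Fin n → Option (Fin k) => (fun i => (ω i).bind (bbBr T)) = c),
              outcomeProb n k z ω)
          else 0 := by
    rw [← Finset.sum_fiberwise Finset.univ
      (fun ω : Fin n → Option (Fin k) => (fun i => (ω i).bind (bbBr T)))
      (fun ω => if Match (fun i => (ω i).bind (bbBr T)) then outcomeProb n k z ω else 0)]
    apply Finset.sum_congr rfl
    intro c _
    by_cases hM : Match c
    · rw [if_pos hM]
      apply Finset.sum_congr rfl
      intro ω hω
      have h := (Finset.mem_filter.mp hω).2
      rw [if_pos (by rw [h]; exact hM)]
    · rw [if_neg hM]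
      apply Finset.sum_eq_zero
      intro ω hω
      have h := (Finset.mem_filter.mp hω).2
      rw [if_neg (by rw [h]; exact hM)]
  rw [step2]
  have step3 : ∀ c : Fin n → Option (Fin k),
      (if Match c then
        (∑ ω ∈ Finset.univ.filter
          (fun ω : Fin n → Option (Fin k) => (fun i => (ω i).bind (bbBr T)) = c),
          outcomeProb n k z ω)
      else 0)
      = if Match c then
          (∏ i : Fin n,
            (∑ b : Option (Fin k), if b.bind (bbBr T) = c i then ballWeight k z b else 0))
        else 0 := by
    intro c
    by_cases hM : Match c
    · rw [if_pos hM, if_pos hM, bb_fiber_sum]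
    · rw [if_neg hM, if_neg hM]
  rw [Finset.sum_congr rfl (fun c _ => step3 c), ← Finset.sum_filter]
  rw [← Finset.sum_filter_add_sum_filter_not (Finset.univ.filter Match) Good]
  have hbad : (∑ c ∈ (Finset.univ.filter Match).filter (fun c => ¬ Good c),
      ∏ i : Fin n,
        (∑ b : Option (Fin k), if b.bind (bbBr T) = c i then ballWeight k z b else 0)) = 0 := by
    apply Finset.sum_eq_zero
    intro c hc
    have hng : ¬ Good c := (Finset.mem_filter.mp hc).2
    rw [hGood, not_forall] at hng
    obtain ⟨i, hi⟩ := hng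
    rw [not_forall] at hi
    obtain ⟨j, hj⟩ := hi
    rw [Classical.not_imp] at hj
    obtain ⟨hij, hjT⟩ := hj
    apply Finset.prod_eq_zero (Finset.mem_univ i)
    rw [hij, bb_coordSum_some, if_neg hjT]
  rw [hbad, add_zero]
  have hgood : ∀ c ∈ (Finset.univ.filter Match).filter Good,
      (∏ i : Fin n,
        (∑ b : Option (Fin k), if b.bind (bbBr T) = c i then ballWeight k z b else 0))
      = (z / k) ^ T.card * (1 - T.card * z / k) ^ (n - T.card) := by
    intro c hc
    rw [Finset.mem_filter, Finset.mem_filter] at hc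
    exact bb_prod_coord n k hk z T c hc.1.2 hc.2
  rw [Finset.sum_congr rfl hgood, Finset.sum_const, nsmul_eq_mul]
  congr 1
  rw [Finset.filter_filter]
  rw [show (Finset.univ.filter fun c : Fin n → Option (Fin k) => Match c ∧ Good c)
    = Finset.univ.filter (fun c : Fin n → Option (Fin k) =>
        (∀ j ∈ T, (Finset.univ.filter fun i => c i = some j).card = 1) ∧
        (∀ i j, c i = some j → j ∈ T)) from rfl]
  rw [bb_count n k T]

lemma bb_card_le (n k : ℕ) (ω : Fin n → Option (Fin k)) : (singletonBins ω).card ≤ n := by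
  classical
  have hsub : singletonBins ω ⊆ Finset.univ.biUnion (fun i => (ω i).toFinset) := by
    intro j hj
    rw [singletonBins, Finset.mem_filter] at hj
    have hpos : 0 < (Finset.univ.filter fun i => ω i = some j).card := by omega
    obtain ⟨i, hi⟩ := Finset.card_pos.mp hpos
    rw [Finset.mem_biUnion]
    exact ⟨i, Finset.mem_univ i, by simp [(Finset.mem_filter.mp hi).2]⟩
  calc (singletonBins ω).card ≤ (Finset.univ.biUnion (fun i => (ω i).toFinset)).card :=
        Finset.card_le_card hsub
    _ ≤ ∑ i : Fin n, (ω i).toFinset.card := Finset.card_biUnion_le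
    _ ≤ ∑ _i : Fin n, 1 := Finset.sum_le_sum (fun i _ => by cases ω i <;> simp)
    _ = n := by simp

lemma bb_moment (n k r : ℕ) (hk : 1 ≤ k) (z : ℝ) :
    (∑ ω : Fin n → Option (Fin k),
        outcomeProb n k z ω * ((singletonBins ω).card.choose r : ℝ))
      = (k.choose r : ℝ) * (n.descFactorial r : ℝ)
          * ((z / k) ^ r * (1 - r * z / k) ^ (n - r)) := by
  classical
  have hchoose : ∀ ω : Fin n → Option (Fin k),
      ((singletonBins ω).card.choose r : ℝ)
        = ∑ T ∈ Finset.univ.powersetCard r,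
            (if T ⊆ singletonBins ω then (1 : ℝ) else 0) := by
    intro ω
    rw [Finset.sum_boole]
    have hset : (Finset.univ.powersetCard r).filter (fun T => T ⊆ singletonBins ω)
        = (singletonBins ω).powersetCard r := by
      ext T
      simp only [Finset.mem_filter, Finset.mem_powersetCard, Finset.subset_univ, true_and]
      tauto
    rw [hset, Finset.card_powersetCard]
  rw [Finset.sum_congr rfl (fun ω _ => by rw [hchoose ω])]
  simp only [Finset.mul_sum]
  rw [Finset.sum_comm]
  have hinner : ∀ T ∈ Finset.univ.powersetCard r,
      (∑ ω : Fin n → Option (Fin k),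
        outcomeProb n k z ω * (if T ⊆ singletonBins ω then (1:ℝ) else 0))
      = (n.descFactorial r : ℝ) * ((z / k) ^ r * (1 - r * z / k) ^ (n - r)) := by
    intro T hT
    have hTc : T.card = r := (Finset.mem_powersetCard.mp hT).2
    have : (∑ ω : Fin n → Option (Fin k),
        outcomeProb n k z ω * (if T ⊆ singletonBins ω then (1:ℝ) else 0))
        = ∑ ω ∈ Finset.univ.filter
            (fun ω : Fin n → Option (Fin k) => T ⊆ singletonBins ω), outcomeProb n k z ω := by
      rw [Finset.sum_filter]
      apply Finset.sum_congr rfl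
      intro ω _
      by_cases h : T ⊆ singletonBins ω <;> simp [h]
    rw [this, bb_event_sum n k hk z T, hTc]
  rw [Finset.sum_congr rfl hinner, Finset.sum_const, nsmul_eq_mul,
    Finset.card_powersetCard, Finset.card_univ, Fintype.card_fin, mul_assoc]

/-- In the balls-and-bins model with `n ≥ 1` balls, `k ≥ 1` bins and `z ∈ [0,1]`,
for every `0 ≤ x ≤ n`, the probability that the number of singleton bins equals `x` is
`P_n(x) = Σ_{r=x}^{n} (−1)^{r−x}·C(r,x)·C(k,r)·C(n,r)·r!·(z/k)^r·(1 − r·z/k)^{n−r}`. -/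
theorem stmt_3 (n k x : ℕ) (z : ℝ) (hn : 1 ≤ n) (hk : 1 ≤ k)
    (hz0 : 0 ≤ z) (hz1 : z ≤ 1) (hx : x ≤ n) :
    ∑ ω ∈ Finset.univ.filter
        (fun ω : Fin n → Option (Fin k) => (singletonBins ω).card = x),
        outcomeProb n k z ω
      = ∑ r ∈ Finset.Icc x n,
          (-1 : ℝ) ^ (r - x) * (r.choose x : ℝ) * (k.choose r : ℝ)
            * (n.choose r : ℝ) * (r.factorial : ℝ) * (z / k) ^ r
            * (1 - r * z / k) ^ (n - r) := by
  classical
  have step1 : (∑ ω ∈ Finset.univ.filter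
        (fun ω : Fin n → Option (Fin k) => (singletonBins ω).card = x),
        outcomeProb n k z ω)
      = ∑ ω : Fin n → Option (Fin k),
          outcomeProb n k z ω * (if (singletonBins ω).card = x then 1 else 0) := by
    rw [Finset.sum_filter]
    apply Finset.sum_congr rfl
    intro ω _
    by_cases h : (singletonBins ω).card = x <;> simp [h]
  rw [step1]
  have step2 : ∀ ω : Fin n → Option (Fin k),
      outcomeProb n k z ω * (if (singletonBins ω).card = x then 1 else 0)
        = ∑ r ∈ Finset.Icc x n,
            (-1 : ℝ) ^ (r - x) * (r.choose x : ℝ)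
              * (outcomeProb n k z ω * ((singletonBins ω).card.choose r : ℝ)) := by
    intro ω
    have := bb_key x n (singletonBins ω).card hx (bb_card_le n k ω)
    calc outcomeProb n k z ω * (if (singletonBins ω).card = x then 1 else 0)
        = outcomeProb n k z ω * ∑ r ∈ Finset.Icc x n,
            (-1 : ℝ) ^ (r - x) * (r.choose x : ℝ) * ((singletonBins ω).card.choose r : ℝ) := by
          rw [this]
      _ = _ := by rw [Finset.mul_sum]; apply Finset.sum_congr rfl; intro r _; ring
  rw [Finset.sum_congr rfl (fun ω _ => step2 ω), Finset.sum_comm]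
  apply Finset.sum_congr rfl
  intro r hr
  rw [← Finset.mul_sum, bb_moment n k r hk z]
  have hdesc : (n.descFactorial r : ℝ) = (r.factorial : ℝ) * (n.choose r : ℝ) := by
    rw_mod_cast [Nat.descFactorial_eq_factorial_mul_choose]
  rw [hdesc]
  ring
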